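/- Let 𝒳 be a nonempty set, R, J ∈ ℕ with R ≥ 1 and J ≥ 1, and H : 𝒳 → (Fin R × Fin J) → ℕ a map (assigning to each time series its leaf-frequency vector over R leaves in each of J trees). Define the LPS similarity S(x,y) = (1/(R·J)) · Σ_{(r,j) ∈ Fin R × Fin J} min(H(x)(r,j), H(y)(r,j)). Then S is symmetric and positive semidefinite, i.e. S is a kernel. (Theorem A.1: LPS is a kernel.) -/
import Mathlib


theorem LPS_is_kernel {𝒳 : Type*} [Nonempty 𝒳] (R J : ℕ) (hR : 1 ≤ R) (hJ : 1 ≤ J)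
    (H : 𝒳 → (Fin R × Fin J) → ℕ)
    (S : 𝒳 → 𝒳 → ℝ)
    (hS : ∀ x y, S x y = (1 / (R * J : ℝ)) *
      ∑ p : Fin R × Fin J, (min (H x p) (H y p) : ℕ)) :
    (∀ x y, S x y = S y x) ∧
    (∀ (n : ℕ) (a : Fin n → ℝ) (x : Fin n → 𝒳),
      0 ≤ ∑ i, ∑ j, a i * a j * S (x i) (x j)) := by
  constructor
  · intro x y
    simp only [hS, min_comm]
  · intro n a x
    set N := (∑ i, ∑ p : Fin R × Fin J, H (x i) p) + 1 with hNdef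
    have hN : ∀ i p, H (x i) p ≤ N := by
      intro i p
      have h1 : H (x i) p ≤ ∑ p, H (x i) p :=
        Finset.single_le_sum (fun p _ => Nat.zero_le _) (Finset.mem_univ p)
      have h2 : ∑ p, H (x i) p ≤ ∑ i, ∑ p, H (x i) p :=
        Finset.single_le_sum (f := fun i => ∑ p, H (x i) p)
          (fun i _ => Nat.zero_le _) (Finset.mem_univ i)
      omega
    have key : ∀ i j p, ((min (H (x i) p) (H (x j) p) : ℕ) : ℝ)
        = ∑ k ∈ Finset.range N,
            (if k < H (x i) p then (1:ℝ) else 0) * (if k < H (x j) p then (1:ℝ) else 0) := by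
      intro i j p
      have : ∀ k, (if k < H (x i) p then (1:ℝ) else 0) * (if k < H (x j) p then (1:ℝ) else 0)
          = if k < min (H (x i) p) (H (x j) p) then (1:ℝ) else 0 := by
        intro k
        by_cases h1 : k < H (x i) p <;> by_cases h2 : k < H (x j) p <;>
          simp [h1, h2, lt_min_iff]
      simp_rw [this]
      rw [Finset.sum_boole]
      have hfil : (Finset.range N).filter (fun k => k < min (H (x i) p) (H (x j) p))
          = Finset.range (min (H (x i) p) (H (x j) p)) := by
        ext k
        simp only [Finset.mem_filter, Finset.mem_range]
        have := hN i p
        omega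
      rw [hfil]
      simp
    set g : Fin n → (Fin R × Fin J) → ℕ → ℝ :=
      fun i p k => a i * (if k < H (x i) p then (1:ℝ) else 0) with hg
    have expand : ∑ i, ∑ j, a i * a j * S (x i) (x j)
        = (1/(R*J:ℝ)) * ∑ p : Fin R × Fin J, ∑ k ∈ Finset.range N,
            (∑ i, g i p k)^2 := by
      have step1 : ∀ i j, a i * a j * S (x i) (x j)
          = (1/(R*J:ℝ)) * ∑ p : Fin R × Fin J, ∑ k ∈ Finset.range N,
              g i p k * g j p k := by
        intro i j
        rw [hS, Nat.cast_sum]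
        simp_rw [key, hg, Finset.mul_sum]
        refine Finset.sum_congr rfl fun p _ => Finset.sum_congr rfl fun k _ => ?_
        ring
      simp_rw [step1, ← Finset.mul_sum]
      congr 1
      have inner : ∀ i : Fin n,
          ∑ j, ∑ p : Fin R × Fin J, ∑ k ∈ Finset.range N, g i p k * g j p k
          = ∑ p : Fin R × Fin J, ∑ k ∈ Finset.range N, ∑ j, g i p k * g j p k := by
        intro i
        rw [Finset.sum_comm]
        exact Finset.sum_congr rfl fun p _ => Finset.sum_comm
      simp_rw [inner]
      rw [Finset.sum_comm]
      refine Finset.sum_congr rfl fun p _ => ?_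
      rw [Finset.sum_comm]
      refine Finset.sum_congr rfl fun k _ => ?_
      rw [sq, Finset.sum_mul_sum]
    rw [expand]
    have h1 : (0:ℝ) ≤ 1/(R*J:ℝ) := by positivity
    refine mul_nonneg h1 (Finset.sum_nonneg fun p _ => Finset.sum_nonneg fun k _ => ?_)
    positivity
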